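/- If G is a 2-connected multigraph admitting an interval t-coloring, then t ≤ 1 + ⌊|V(G)|/2⌋·(Δ(G) − 1). -/

import Mathlib

/-- A finite loopless multigraph: an edge-indexed family of unordered pairs of
vertices, none of which is a loop. -/
structure Multigraph (V E : Type*) where
  /-- the endpoints of an edge -/
  ends : E → Sym2 V
  loopless : ∀ e, ¬ (ends e).IsDiag

namespace Multigraph

variable {V E : Type*} (G : Multigraph V E)

/-- `v` is an endpoint of `e`. -/
def Inc (v : V) (e : E) : Prop := v ∈ G.ends e

/-- The degree of a vertex: the number of edges incident to it. -/
noncomputable def degree (v : V) : ℕ := Nat.card {e : E // G.Inc v e}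

/-- The maximum degree `Δ(G)`. -/
noncomputable def maxDegree : ℕ := sSup (Set.range G.degree)

/-- Two vertices are adjacent if some edge joins them. -/
def Adj (a b : V) : Prop := ∃ e, G.ends e = s(a, b)

/-- `G` is connected. -/
def Connected : Prop := Nonempty V ∧ ∀ u w : V, Relation.ReflTransGen G.Adj u w

/-- `G` is 2-connected: it is connected and removing any single vertex leaves it
connected (any two vertices distinct from `v` are joined by a walk avoiding `v`). -/
def TwoConnected : Prop :=
  G.Connected ∧ ∀ v u w : V, u ≠ v → w ≠ v →
    Relation.ReflTransGen (fun a b => G.Adj a b ∧ a ≠ v ∧ b ≠ v) u w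

/-- An interval `t`-coloring of the multigraph `G`: a proper edge coloring with
colors `1,…,t`, each color used at least once, such that the colors on the edges
incident to every vertex form an interval of consecutive integers. -/
def IsIntervalColoring (t : ℕ) (c : E → ℕ) : Prop :=
  (∀ e₁ e₂ : E, e₁ ≠ e₂ → (∃ v, G.Inc v e₁ ∧ G.Inc v e₂) → c e₁ ≠ c e₂) ∧
  (∀ e, c e ∈ Set.Icc 1 t) ∧
  (∀ i ∈ Set.Icc 1 t, ∃ e, c e = i) ∧
  (∀ (v : V) (i j k : ℕ), (∃ e, G.Inc v e ∧ c e = i) → (∃ e, G.Inc v e ∧ c e = j) →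
    i ≤ k → k ≤ j → ∃ e, G.Inc v e ∧ c e = k)

/-- `G` has a cycle of length `n`: `n ≥ 2` distinct vertices and `n` distinct edges
arranged cyclically. -/
def HasCycleOfLength (n : ℕ) : Prop :=
  2 ≤ n ∧ ∃ (f : ZMod n → V) (g : ZMod n → E),
    Function.Injective f ∧ Function.Injective g ∧
    ∀ i : ZMod n, G.ends (g i) = s(f i, f (i + 1))

end Multigraph

namespace Multigraph

variable {V E : Type*} {G : Multigraph V E}

/-- There is a walk of length `k` from `u` to `w`. -/
def ReachIn (G : Multigraph V E) : ℕ → V → V → Prop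
  | 0, u, w => u = w
  | k+1, u, w => ∃ x, G.Adj u x ∧ G.ReachIn k x w

lemma reachIn_snoc : ∀ {k : ℕ} {u w z : V},
    G.ReachIn k u w → G.Adj w z → G.ReachIn (k+1) u z := by
  intro k
  induction k with
  | zero =>
    intro u w z h ha
    obtain rfl : u = w := h
    exact ⟨z, ha, rfl⟩
  | succ k ih =>
    intro u w z h ha
    obtain ⟨x, hx, hr⟩ := h
    exact ⟨x, hx, ih hr ha⟩

lemma exists_reachIn {u w : V} (h : Relation.ReflTransGen G.Adj u w) :
    ∃ k, G.ReachIn k u w := by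
  induction h with
  | refl => exact ⟨0, rfl⟩
  | tail _ hadj ih =>
    obtain ⟨k, hk⟩ := ih
    exact ⟨k+1, reachIn_snoc hk hadj⟩

lemma reachIn_mid : ∀ {k : ℕ} {u w : V}, G.ReachIn k u w →
    ∀ j, j ≤ k → ∃ z, G.ReachIn j u z ∧ G.ReachIn (k - j) z w := by
  intro k
  induction k with
  | zero =>
    intro u w h j hj
    interval_cases j
    exact ⟨u, rfl, h⟩
  | succ k ih =>
    intro u w h j hj
    cases j with
    | zero => exact ⟨u, rfl, h⟩
    | succ j =>
      obtain ⟨x, hx, hr⟩ := h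
      obtain ⟨z, h1, h2⟩ := ih hr j (by omega)
      exact ⟨z, ⟨x, hx, h1⟩, by simpa [Nat.succ_sub_succ] using h2⟩

end Multigraph

/-- If `G` is a 2-connected multigraph admitting an interval `t`-coloring, then
`t ≤ 1 + ⌊|V(G)|/2⌋·(Δ(G) − 1)`. -/
theorem stmt7 {V E : Type*} [Fintype V] [Fintype E] (G : Multigraph V E)
    (h2c : G.TwoConnected) (t : ℕ) (c : E → ℕ) (h : G.IsIntervalColoring t c) :
    t ≤ 1 + Fintype.card V / 2 * (G.maxDegree - 1) := by
  classical
  obtain ⟨hprop, hIcc, hsurj, hint⟩ := h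
  rcases isEmpty_or_nonempty E with hE | hE
  · -- no edges: t = 0
    have ht : t = 0 := by
      by_contra h0
      obtain ⟨e, _⟩ := hsurj 1 (Set.mem_Icc.2 ⟨le_refl 1, by omega⟩)
      exact hE.false e
    simp [ht]
  · obtain ⟨e0⟩ := hE
    have ht1 : 1 ≤ t := le_trans (hIcc e0).1 (hIcc e0).2
    obtain ⟨e1, he1⟩ := hsurj 1 (Set.mem_Icc.2 ⟨le_refl 1, ht1⟩)
    obtain ⟨et, het⟩ := hsurj t (Set.mem_Icc.2 ⟨ht1, le_refl t⟩)
    -- endpoints of e1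
    obtain ⟨⟨a, b⟩, hab'⟩ := Quot.exists_rep (G.ends e1)
    have hab : G.ends e1 = s(a, b) := hab'.symm
    have hne_ab : a ≠ b := fun hh => G.loopless e1 (by rw [hab, hh]; exact Sym2.mk_isDiag_iff.2 rfl)
    have haInc : G.Inc a e1 := by show a ∈ G.ends e1; rw [hab]; exact Sym2.mem_mk_left a b
    have hbInc : G.Inc b e1 := by show b ∈ G.ends e1; rw [hab]; exact Sym2.mem_mk_right a b
    -- endpoints of et
    obtain ⟨⟨x, y⟩, hxy'⟩ := Quot.exists_rep (G.ends et)
    have hxy : G.ends et = s(x, y) := hxy'.symm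
    have hne_xy : x ≠ y := fun hh => G.loopless et (by rw [hxy, hh]; exact Sym2.mk_isDiag_iff.2 rfl)
    have hxInc : G.Inc x et := by show x ∈ G.ends et; rw [hxy]; exact Sym2.mem_mk_left x y
    have hyInc : G.Inc y et := by show y ∈ G.ends et; rw [hxy]; exact Sym2.mem_mk_right x y
    -- distance from {a, b}
    have hexists : ∀ v : V, ∃ k, G.ReachIn k a v ∨ G.ReachIn k b v := by
      intro v
      obtain ⟨k, hk⟩ := Multigraph.exists_reachIn (h2c.1.2 a v)
      exact ⟨k, Or.inl hk⟩
    set D : V → ℕ := fun v => Nat.find (hexists v) with hDdef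
    have hDspec : ∀ v, G.ReachIn (D v) a v ∨ G.ReachIn (D v) b v := fun v => Nat.find_spec (hexists v)
    have hDmin : ∀ v k, (G.ReachIn k a v ∨ G.ReachIn k b v) → D v ≤ k :=
      fun v k hk => Nat.find_min' (hexists v) hk
    have hDa : D a = 0 := Nat.le_zero.1 (hDmin a 0 (Or.inl rfl))
    have hDb : D b = 0 := Nat.le_zero.1 (hDmin b 0 (Or.inr rfl))
    have hstep : ∀ u w : V, G.Adj u w → D w ≤ D u + 1 := by
      intro u w hadj
      rcases hDspec u with hr | hr
      · exact hDmin w (D u + 1) (Or.inl (Multigraph.reachIn_snoc hr hadj))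
      · exact hDmin w (D u + 1) (Or.inr (Multigraph.reachIn_snoc hr hadj))
    have hDle : ∀ (m : ℕ) (z w : V), G.ReachIn m z w → D w ≤ D z + m := by
      intro m
      induction m with
      | zero =>
        intro z w hzw
        obtain rfl : z = w := hzw
        omega
      | succ m ih =>
        intro z w hzw
        obtain ⟨p, hp, hr⟩ := hzw
        have h1 := ih p w hr
        have h2 := hstep z p hp
        omega
    -- spectra
    set M : V → ℕ := fun v => sSup (c '' {e | G.Inc v e}) with hMdef
    set m : V → ℕ := fun v => sInf (c '' {e | G.Inc v e}) with hmdef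
    have hΔ1 : 1 ≤ G.maxDegree := by
      have h1 : 1 ≤ G.degree a := by
        have : Nonempty {e // G.Inc a e} := ⟨⟨e1, haInc⟩⟩
        exact Nat.one_le_iff_ne_zero.2 (Nat.card_pos).ne'
      exact le_trans h1 (le_csSup (Set.finite_range _).bddAbove ⟨a, rfl⟩)
    have hfinspec : ∀ v : V, (c '' {e | G.Inc v e}).Finite :=
      fun v => Set.Finite.image _ (Set.toFinite _)
    have hmemM : ∀ (v : V) (e : E), G.Inc v e → c e ≤ M v := by
      intro v e he
      exact le_csSup (hfinspec v).bddAbove ⟨e, he, rfl⟩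
    have hmemm : ∀ (v : V) (e : E), G.Inc v e → m v ≤ c e := by
      intro v e he
      exact Nat.sInf_le ⟨e, he, rfl⟩
    have hcard : ∀ v : V, (∃ e, G.Inc v e) → M v + 1 ≤ m v + G.maxDegree := by
      intro v hv
      obtain ⟨ev, hev⟩ := hv
      have hne : (c '' {e | G.Inc v e}).Nonempty := ⟨c ev, ev, hev, rfl⟩
      have hmS : m v ∈ c '' {e | G.Inc v e} := Nat.sInf_mem hne
      have hMS : M v ∈ c '' {e | G.Inc v e} := Nat.sSup_mem hne (hfinspec v).bddAbove
      obtain ⟨em, hem, hcm⟩ := hmS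
      obtain ⟨eM, heM, hcM⟩ := hMS
      have hmM : m v ≤ M v := le_trans (hmemm v eM heM) (le_of_eq hcM)
      haveI : Fintype {e // G.Inc v e} := Fintype.ofFinite _
      have hsub : Finset.Icc (m v) (M v) ⊆
          Finset.univ.image (fun e : {e // G.Inc v e} => c e.1) := by
        intro k hk
        rw [Finset.mem_Icc] at hk
        obtain ⟨e, he, hce⟩ := hint v (m v) (M v) k ⟨em, hem, hcm⟩ ⟨eM, heM, hcM⟩ hk.1 hk.2
        exact Finset.mem_image.2 ⟨⟨e, he⟩, Finset.mem_univ _, hce⟩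
      have h1 := Finset.card_le_card hsub
      have h2 := Finset.card_image_le (s := (Finset.univ : Finset {e // G.Inc v e}))
        (f := fun e => c e.1)
      rw [Nat.card_Icc] at h1
      rw [Finset.card_univ] at h2
      have hdeg : Fintype.card {e // G.Inc v e} = G.degree v := Nat.card_eq_fintype_card.symm
      have hmax : G.degree v ≤ G.maxDegree :=
        le_csSup (Set.finite_range _).bddAbove ⟨v, rfl⟩
      omega
    have hAdjM : ∀ u w : V, G.Adj u w → M w ≤ M u + (G.maxDegree - 1) := by
      intro u w hadj
      obtain ⟨e, he⟩ := hadj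
      have hu : G.Inc u e := by show u ∈ G.ends e; rw [he]; exact Sym2.mem_mk_left u w
      have hw : G.Inc w e := by show w ∈ G.ends e; rw [he]; exact Sym2.mem_mk_right u w
      have h1 := hmemm w e hw
      have h2 := hmemM u e hu
      have h3 := hcard w ⟨e, hw⟩
      omega
    have hwalkM : ∀ (k : ℕ) (u w : V), G.ReachIn k u w →
        M w ≤ M u + k * (G.maxDegree - 1) := by
      intro k
      induction k with
      | zero =>
        intro u w huw
        obtain rfl : u = w := huw
        omega
      | succ k ih =>
        intro u w huw
        obtain ⟨p, hp, hr⟩ := huw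
        have h1 := ih p w hr
        have h2 := hAdjM u p hp
        have h3 : (k+1) * (G.maxDegree - 1) = k * (G.maxDegree - 1) + (G.maxDegree - 1) :=
          Nat.succ_mul _ _
        omega
    -- starting bound at a and b
    have hstart : ∀ s : V, G.Inc s e1 → M s + 1 ≤ 1 + G.maxDegree := by
      intro s hs
      have h1 : m s ≤ 1 := he1 ▸ hmemm s e1 hs
      have h2 := hcard s ⟨e1, hs⟩
      omega
    -- choose the closer endpoint of et
    set d0 : ℕ := min (D x) (D y) with hd0def
    obtain ⟨x', hx'Inc, hDx'⟩ : ∃ x' : V, G.Inc x' et ∧ D x' = d0 := by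
      rcases le_total (D x) (D y) with hle | hle
      · exact ⟨x, hxInc, (min_eq_left hle).symm⟩
      · exact ⟨y, hyInc, (min_eq_right hle).symm⟩
    -- counting : 2 * d0 + 2 ≤ |V|
    have hIVT : ∀ (v u w : V), Relation.ReflTransGen (fun p q => G.Adj p q ∧ p ≠ v ∧ q ≠ v) u w →
        u ≠ v → ∀ i, D u ≤ i → i ≤ D w → ∃ z, z ≠ v ∧ D z = i := by
      intro v u w hwalk
      induction hwalk with
      | refl =>
        intro hu i h1 h2
        exact ⟨u, hu, le_antisymm h1 h2⟩
      | @tail p q hwalk' hstep' ih =>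
        intro hu i h1 h2
        by_cases hcase : i ≤ D p
        · exact ih hu i h1 hcase
        · have h4 : D q ≤ D p + 1 := hstep p q hstep'.1
          exact ⟨q, hstep'.2.2, by omega⟩
    have htwo : ∀ i : ℕ, i < d0 → ∃ v z : V, v ≠ z ∧ D v = i ∧ D z = i := by
      intro i hi
      rcases Nat.eq_zero_or_pos i with rfl | hipos
      · exact ⟨a, b, hne_ab, hDa, hDb⟩
      · -- find a vertex at distance exactly i
        have hx'd : i ≤ D x' := by omega
        obtain ⟨v, hv⟩ : ∃ v : V, D v = i := by
          rcases hDspec x' with hr | hr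
          · obtain ⟨z, hz1, hz2⟩ := Multigraph.reachIn_mid hr i (by omega)
            have hzle : D z ≤ i := hDmin z i (Or.inl hz1)
            have hzge := hDle (D x' - i) z x' hz2
            exact ⟨z, by omega⟩
          · obtain ⟨z, hz1, hz2⟩ := Multigraph.reachIn_mid hr i (by omega)
            have hzle : D z ≤ i := hDmin z i (Or.inr hz1)
            have hzge := hDle (D x' - i) z x' hz2
            exact ⟨z, by omega⟩
        have hav : a ≠ v := fun hh => by rw [← hh] at hv; omega
        have hx'v : x' ≠ v := fun hh => by rw [← hh] at hv; omega
        obtain ⟨z, hz1, hz2⟩ := hIVT v a x' (h2c.2 v a x' hav hx'v) hav i (by omega) hx'd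
        exact ⟨v, z, fun hh => hz1 hh.symm, hv, hz2⟩
    have hcount : 2 * d0 + 2 ≤ Fintype.card V := by
      set L : ℕ → Finset V := fun i => Finset.univ.filter (fun z => D z = i) with hLdef
      have hL2 : ∀ i ∈ Finset.range d0, 2 ≤ (L i).card := by
        intro i hi
        rw [Finset.mem_range] at hi
        obtain ⟨v, z, hvz, hv, hz⟩ := htwo i hi
        have : ({v, z} : Finset V) ⊆ L i := by
          intro w hw
          rw [Finset.mem_insert, Finset.mem_singleton] at hw
          rcases hw with rfl | rfl <;> simp [hLdef, hv, hz]
        calc 2 = ({v, z} : Finset V).card := (Finset.card_pair hvz).symm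
          _ ≤ (L i).card := Finset.card_le_card this
      have hdisj : ((Finset.range d0 : Finset ℕ) : Set ℕ).PairwiseDisjoint L := by
        intro i _ j _ hij
        simp only [Function.onFun, Finset.disjoint_left]
        intro w hw1 hw2
        simp only [hLdef, Finset.mem_filter] at hw1 hw2
        exact hij (hw1.2 ▸ hw2.2 ▸ rfl)
      have hLsub : (Finset.range d0).biUnion L ⊆ Finset.univ \ {x, y} := by
        intro w hw
        rw [Finset.mem_biUnion] at hw
        obtain ⟨i, hi, hwi⟩ := hw
        rw [Finset.mem_range] at hi
        simp only [hLdef, Finset.mem_filter] at hwi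
        have hDw : D w < d0 := hwi.2 ▸ hi
        have hwx : w ≠ x := fun hh => by rw [hh] at hDw; omega
        have hwy : w ≠ y := fun hh => by rw [hh] at hDw; omega
        simp [hwx, hwy]
      have h1 : 2 * d0 ≤ ((Finset.range d0).biUnion L).card := by
        rw [Finset.card_biUnion (fun i hi j hj hij => hdisj hi hj hij)]
        calc 2 * d0 = ∑ _i ∈ Finset.range d0, 2 := by
              rw [Finset.sum_const, Finset.card_range]; ring
          _ ≤ ∑ i ∈ Finset.range d0, (L i).card := Finset.sum_le_sum hL2
      have h2 := Finset.card_le_card hLsub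
      have h3 : (Finset.univ \ ({x, y} : Finset V)).card = Fintype.card V - 2 := by
        rw [Finset.card_sdiff_of_subset (Finset.subset_univ _), Finset.card_univ, Finset.card_pair hne_xy]
      have h4 : ({x, y} : Finset V).card ≤ Fintype.card V := by
        rw [← Finset.card_univ]
        exact Finset.card_le_card (Finset.subset_univ _)
      rw [Finset.card_pair hne_xy] at h4
      omega
    -- assemble
    have hreach : G.ReachIn d0 a x' ∨ G.ReachIn d0 b x' := hDx' ▸ hDspec x'
    have hMx' : M x' + 1 ≤ 1 + G.maxDegree + d0 * (G.maxDegree - 1) := by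
      rcases hreach with hr | hr
      · have h1 := hwalkM d0 a x' hr
        have h2 := hstart a haInc
        omega
      · have h1 := hwalkM d0 b x' hr
        have h2 := hstart b hbInc
        omega
    have htM : t ≤ M x' := het ▸ hmemM x' et hx'Inc
    have hd0n : d0 + 1 ≤ Fintype.card V / 2 :=
      (Nat.le_div_iff_mul_le (by norm_num)).2 (by omega)
    have hmul : (d0 + 1) * (G.maxDegree - 1) ≤ Fintype.card V / 2 * (G.maxDegree - 1) :=
      Nat.mul_le_mul_right _ hd0n
    have hexp : (d0 + 1) * (G.maxDegree - 1) = d0 * (G.maxDegree - 1) + (G.maxDegree - 1) :=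
      Nat.succ_mul _ _
    omega
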